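/- arXiv:1802.03348 — 3 statements merged into one kernel-verified Lean document; each statement's English description precedes it below -/
import Mathlib

section
/- Suppose s₁ and s₂ are entire functions on ℂ, k is a nonnegative integer, and for all z ≠ 0 we have s₁(z) = z^k · s₂(1/z). Then s₁ is a polynomial of degree at most k. -/
open Filter Polynomial Bornology Topology

lemma aux (k : ℕ) : ∀ s₁ s₂ : ℂ → ℂ, Differentiable ℂ s₁ → Differentiable ℂ s₂ →
    (∀ z : ℂ, z ≠ 0 → s₁ z = z ^ k * s₂ (1 / z)) →
    ∃ p : Polynomial ℂ, p.degree ≤ (k : ℕ∞) ∧ ∀ z : ℂ, s₁ z = p.eval z := by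
  induction k with
  | zero =>
    intro s₁ s₂ h₁ h₂ h
    have hten : Tendsto s₁ (cocompact ℂ) (𝓝 (s₂ 0)) := by
      rw [← Metric.cobounded_eq_cocompact]
      have h0 : Tendsto (fun z : ℂ => s₂ (1 / z)) (cobounded ℂ) (𝓝 (s₂ 0)) := by
        simpa [Function.comp_def] using (h₂.continuous.tendsto 0).comp (by simpa using tendsto_inv₀_cobounded (α := ℂ))
      refine h0.congr' ?_
      filter_upwards [isBounded_singleton (x := (0:ℂ))] with z hz
      simp only [Set.mem_compl_iff, Set.mem_singleton_iff] at hz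
      simpa using (h z hz).symm
    have := h₁.eq_const_of_tendsto_cocompact hten
    exact ⟨C (s₂ 0), degree_C_le.trans (le_of_eq rfl), fun z => by rw [this]; simp⟩
  | succ k ih =>
    intro s₁ s₂ h₁ h₂ h
    set c := s₁ 0 with hc
    set g := dslope s₁ 0 with hg
    have hgdiff : Differentiable ℂ g := by
      intro z
      rcases eq_or_ne z 0 with rfl | hz
      · obtain ⟨p, hp⟩ := h₁.analyticAt 0
        exact hp.has_fpower_series_dslope_fslope.differentiableAt
      · exact (differentiableAt_dslope_of_ne hz).mpr (h₁ z)
    have ht₂ : Differentiable ℂ (fun w : ℂ => s₂ w - c * w ^ (k+1)) := by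
      fun_prop
    have hrel : ∀ z : ℂ, z ≠ 0 → g z = z ^ k * (s₂ (1/z) - c * (1/z) ^ (k+1)) := by
      intro z hz
      rw [hg, dslope_of_ne _ hz, slope_def_field, h z hz]
      field_simp
      have hX : z * z ^ k * z⁻¹ * z⁻¹ ^ k = 1 := by
        rw [show z * z ^ k * z⁻¹ * z⁻¹ ^ k = (z * z⁻¹) * (z * z⁻¹) ^ k by ring, mul_inv_cancel₀ hz, one_pow, one_mul]
      linear_combination c * hX + hc
    obtain ⟨q, hqdeg, hq⟩ := ih g (fun w => s₂ w - c * w ^ (k+1)) hgdiff ht₂ hrel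
    refine ⟨C c + X * q, ?_, ?_⟩
    · refine (degree_add_le _ _).trans (max_le (degree_C_le.trans ?_) ?_)
      · exact WithBot.coe_le_coe.mpr (Nat.zero_le _)
      · refine (degree_mul_le _ _).trans ?_
        calc degree (X : ℂ[X]) + q.degree ≤ 1 + (k : WithBot ℕ) := by
                exact add_le_add degree_X_le hqdeg
          _ = ((k+1 : ℕ) : WithBot ℕ) := by push_cast; ring
    · intro z
      have hs : s₁ z = c + z * g z := by
        rcases eq_or_ne z 0 with rfl | hz
        · simp [hc]
        · rw [hg, dslope_of_ne _ hz, slope_def_field]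
          field_simp
          rw [hc]; ring
      rw [hs, hq]; simp

/-- If `s₁, s₂` are entire and `s₁(z) = z^k s₂(1/z)` for `z ≠ 0`, then `s₁` is a
polynomial of degree at most `k`. -/
theorem stmt2 (s₁ s₂ : ℂ → ℂ) (h₁ : Differentiable ℂ s₁) (h₂ : Differentiable ℂ s₂)
    (k : ℕ) (h : ∀ z : ℂ, z ≠ 0 → s₁ z = z ^ k * s₂ (1 / z)) :
    ∃ p : Polynomial ℂ, p.degree ≤ (k : ℕ∞) ∧ ∀ z : ℂ, s₁ z = p.eval z :=
  aux k s₁ s₂ h₁ h₂ h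
end

section
/- Suppose s₁ and s₂ are entire functions on ℂ, k is a nonnegative integer, and s₁(z) = z^k · s₂(1/z) for all z ≠ 0. If s₁(z) = Σ aₙ zⁿ and s₂(z) = Σ bₙ zⁿ are the Taylor expansions at 0, then aₙ = 0 for n > k, bₙ = 0 for n > k, and bₙ = a_{k−n} for 0 ≤ n ≤ k. -/
open Filter Finset Topology

lemma pow_div_helper {z : ℂ} (hz : z ≠ 0) {i m : ℕ} (him : i ≤ m) (w : ℂ) :
    z ^ m * (w * (1 / z) ^ i) = w * z ^ (m - i) := by
  rw [one_div, inv_pow, show m = (m - i) + i by omega, pow_add]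
  field_simp
  rw [Nat.add_sub_cancel]
  ring

lemma myOnBall {c : ℕ → ℂ} {f : ℂ → ℂ}
    (hc : ∀ z : ℂ, HasSum (fun n => c n * z ^ n) (f z)) :
    HasFPowerSeriesOnBall f (FormalMultilinearSeries.ofScalars ℂ c) 0 ⊤ := by
  have hrad : (FormalMultilinearSeries.ofScalars ℂ c).radius = ⊤ := by
    apply FormalMultilinearSeries.radius_eq_top_of_summable_norm
    intro r
    have h1 : Summable fun n => ‖c n * ((r : ℝ) : ℂ) ^ n‖ :=
      summable_norm_iff.2 (hc _).summable
    refine h1.congr fun n => ?_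
    rw [FormalMultilinearSeries.ofScalars_norm, norm_mul, norm_pow, Complex.norm_real,
      Real.norm_eq_abs, abs_of_nonneg r.coe_nonneg]
  refine ⟨hrad ▸ le_rfl, by simp, fun {y} _ => ?_⟩
  simp only [FormalMultilinearSeries.ofScalars_apply_eq, smul_eq_mul, zero_add]
  exact hc y

lemma myZero {c : ℕ → ℂ} (hc : ∀ z : ℂ, HasSum (fun n => c n * z ^ n) 0) :
    ∀ n, c n = 0 := by
  have h0 : HasFPowerSeriesAt (0 : ℂ → ℂ) (FormalMultilinearSeries.ofScalars ℂ c) 0 :=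
    (myOnBall (f := fun _ => (0 : ℂ)) hc).hasFPowerSeriesAt
  have h1 := h0.eq_zero
  intro n
  exact congrFun (((FormalMultilinearSeries.ofScalars_series_eq_zero ℂ).1 h1)) n

lemma myUnique {a c : ℕ → ℂ} {f : ℂ → ℂ}
    (ha : ∀ z : ℂ, HasSum (fun n => a n * z ^ n) (f z))
    (hc : ∀ z : ℂ, HasSum (fun n => c n * z ^ n) (f z)) : ∀ n, a n = c n := by
  intro n
  have h := myZero (c := fun n => a n - c n) (fun z => by
    have e : (fun n => (a n - c n) * z ^ n) = fun n => a n * z ^ n - c n * z ^ n := by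
      funext m; ring
    rw [e]
    simpa using (ha z).sub (hc z)) n
  linear_combination h

lemma myTail (s₁ s₂ : ℂ → ℂ) (h₂ : Continuous s₂) (k : ℕ)
    (h : ∀ z : ℂ, z ≠ 0 → s₁ z = z ^ k * s₂ (1 / z))
    (a : ℕ → ℂ) (ha : ∀ z : ℂ, HasSum (fun n => a n * z ^ n) (s₁ z)) :
    ∀ n, k < n → a n = 0 := by
  have hsum : ∀ z : ℂ, Summable fun n => a (n + (k + 1)) * z ^ n := by
    intro z
    rcases eq_or_ne z 0 with rfl | hz
    · apply summable_of_ne_finset_zero (s := {0})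
      intro n hn
      rw [zero_pow (by simpa using hn : n ≠ 0), mul_zero]
    · have S1 : Summable fun n => a (n + (k + 1)) * z ^ (n + (k + 1)) :=
        ((summable_nat_add_iff (f := fun n => a n * z ^ n) (k + 1)).2 (ha z).summable)
      refine (S1.mul_right ((z ^ (k + 1))⁻¹)).congr fun n => ?_
      rw [pow_add, mul_assoc, mul_assoc, mul_inv_cancel₀ (pow_ne_zero _ hz), mul_one]
  have hg : ∀ z : ℂ, HasSum (fun n => a (n + (k + 1)) * z ^ n)
      ((fun w => ∑' n, a (n + (k + 1)) * w ^ n) z) := fun z => (hsum z).hasSum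
  set g : ℂ → ℂ := fun w => ∑' n, a (n + (k + 1)) * w ^ n
  have key : ∀ z : ℂ, z ^ (k + 1) * g z = s₁ z - ∑ i ∈ range (k + 1), a i * z ^ i := by
    intro z
    have e : (fun n => z ^ (k + 1) * (a (n + (k + 1)) * z ^ n)) =
        fun n => a (n + (k + 1)) * z ^ (n + (k + 1)) := by
      funext n; rw [pow_add]; ring
    have h1 : HasSum (fun n => a (n + (k + 1)) * z ^ (n + (k + 1))) (z ^ (k + 1) * g z) := by
      have h2 := (hg z).mul_left (z ^ (k + 1))
      rwa [e] at h2
    have h2 : HasSum (fun n => a (n + (k + 1)) * z ^ (n + (k + 1)))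
        (s₁ z - ∑ i ∈ range (k + 1), a i * z ^ i) :=
      (hasSum_nat_add_iff' (k + 1)).2 (ha z)
    exact h1.unique h2
  have hgdiff : Differentiable ℂ g := fun w =>
    ((myOnBall hg).differentiableOn.differentiableAt
      (EMetric.isOpen_ball.mem_nhds (by simp [edist_lt_top])))
  set F : ℂ → ℂ := fun w => w * s₂ w - ∑ i ∈ range (k + 1), a i * w ^ (k + 1 - i) with hFdef
  have hFc : Continuous F :=
    (continuous_id.mul h₂).sub
      (continuous_finset_sum _ fun i _ => continuous_const.mul (continuous_pow _))
  have hF0 : F 0 = 0 := by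
    simp only [hFdef, zero_mul, zero_sub, neg_eq_zero]
    refine Finset.sum_eq_zero fun i hi => ?_
    rw [zero_pow (by have := Finset.mem_range.1 hi; omega : k + 1 - i ≠ 0), mul_zero]
  have hF : ∀ z : ℂ, z ≠ 0 → g z = F (1 / z) := by
    intro z hz
    apply mul_left_cancel₀ (pow_ne_zero (k + 1) hz)
    rw [key z, h z hz]
    have e1 : z ^ (k + 1) * ((1 / z) * s₂ (1 / z)) = z ^ k * s₂ (1 / z) := by
      rw [pow_succ]
      field_simp
    have e2 : z ^ (k + 1) * ∑ i ∈ range (k + 1), a i * (1 / z) ^ (k + 1 - i)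
        = ∑ i ∈ range (k + 1), a i * z ^ i := by
      rw [Finset.mul_sum]
      refine Finset.sum_congr rfl fun i hi => ?_
      have e3 : k + 1 - (k + 1 - i) = i := by have := Finset.mem_range.1 hi; omega
      rw [pow_div_helper hz (by omega) (a i), e3]
    simp only [hFdef]
    rw [mul_sub, e1, e2]
  have h1z : Tendsto (fun z : ℂ => 1 / z) (cocompact ℂ) (𝓝 0) := by
    rw [← Metric.cobounded_eq_cocompact]
    simpa [one_div] using tendsto_inv₀_cobounded (α := ℂ)
  have hFt : Tendsto (fun z : ℂ => F (1 / z)) (cocompact ℂ) (𝓝 0) := by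
    have h3 := (hFc.tendsto 0).comp h1z
    rwa [hF0] at h3
  have hgt : Tendsto g (cocompact ℂ) (𝓝 0) := by
    refine hFt.congr' ?_
    filter_upwards [(isCompact_singleton (x := (0:ℂ))).compl_mem_cocompact] with z hz
    exact (hF z hz).symm
  have hg0 : ∀ z : ℂ, g z = 0 := fun z => hgdiff.apply_eq_of_tendsto_cocompact z hgt
  have hc0 : ∀ n, a (n + (k + 1)) = 0 := myZero fun z => hg0 z ▸ hg z
  intro n hn
  have e : a n = a ((n - (k + 1)) + (k + 1)) := by congr 1; omega
  rw [e, hc0]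

/-- Coefficient matching for sections of `O(k)` over `ℂP¹`: if `s₁(z) = z^k s₂(1/z)`
for `z ≠ 0`, with Taylor expansions `s₁ = Σ aₙ zⁿ`, `s₂ = Σ bₙ zⁿ` at `0`, then
`aₙ = 0` and `bₙ = 0` for `n > k`, and `bₙ = a_(k−n)` for `n ≤ k`. -/
theorem stmt3 (s₁ s₂ : ℂ → ℂ) (h₁ : Differentiable ℂ s₁) (h₂ : Differentiable ℂ s₂)
    (k : ℕ) (h : ∀ z : ℂ, z ≠ 0 → s₁ z = z ^ k * s₂ (1 / z))
    (a b : ℕ → ℂ)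
    (ha : ∀ z : ℂ, HasSum (fun n => a n * z ^ n) (s₁ z))
    (hb : ∀ z : ℂ, HasSum (fun n => b n * z ^ n) (s₂ z)) :
    (∀ n : ℕ, k < n → a n = 0) ∧ (∀ n : ℕ, k < n → b n = 0) ∧
    (∀ n : ℕ, n ≤ k → b n = a (k - n)) := by
  have ha0 : ∀ n, k < n → a n = 0 := myTail s₁ s₂ h₂.continuous k h a ha
  have h' : ∀ z : ℂ, z ≠ 0 → s₂ z = z ^ k * s₁ (1 / z) := by
    intro z hz
    have hz' : (1 / z : ℂ) ≠ 0 := one_div_ne_zero hz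
    have h3 := h (1 / z) hz'
    rw [one_div_one_div] at h3
    rw [h3, ← mul_assoc, ← mul_pow, mul_one_div_cancel hz, one_pow, one_mul]
  have hb0 : ∀ n, k < n → b n = 0 := myTail s₂ s₁ h₁.continuous k h' b hb
  refine ⟨ha0, hb0, ?_⟩
  have poly₁ : ∀ w : ℂ, s₁ w = ∑ i ∈ range (k + 1), a i * w ^ i := by
    intro w
    refine (ha w).unique (hasSum_sum_of_ne_finset_zero fun n hn => ?_)
    rw [ha0 n (by simpa using hn), zero_mul]
  have hQc : Continuous (fun z : ℂ => ∑ n ∈ range (k + 1), a (k - n) * z ^ n) :=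
    continuous_finset_sum _ fun i _ => continuous_const.mul (continuous_pow _)
  have heq : ∀ z : ℂ, z ≠ 0 → s₂ z = ∑ n ∈ range (k + 1), a (k - n) * z ^ n := by
    intro z hz
    rw [h' z hz, poly₁ (1 / z), Finset.mul_sum]
    have e : ∀ i ∈ range (k + 1), z ^ k * (a i * (1 / z) ^ i) = a i * z ^ (k - i) := by
      intro i hi
      rw [pow_div_helper hz (by have := Finset.mem_range.1 hi; omega) (a i)]
    rw [Finset.sum_congr rfl e]
    have e4 := Finset.sum_range_reflect (fun j => a j * z ^ (k - j)) (k + 1)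
    simp only [Nat.add_sub_cancel] at e4
    rw [← e4]
    refine Finset.sum_congr rfl fun n hn => ?_
    have hnk : k - (k - n) = n := by have := Finset.mem_range.1 hn; omega
    rw [hnk]
  have hall : ∀ z : ℂ, s₂ z = ∑ n ∈ range (k + 1), a (k - n) * z ^ n := by
    have e5 := Continuous.ext_on (dense_compl_singleton (0 : ℂ)) h₂.continuous hQc
      (fun z hz => heq z hz)
    exact fun z => congrFun e5 z
  have hc : ∀ z : ℂ, HasSum
      (fun n => (if n ≤ k then a (k - n) else 0) * z ^ n) (s₂ z) := by
    intro z
    have h1 : HasSum (fun n => (if n ≤ k then a (k - n) else 0) * z ^ n)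
        (∑ n ∈ range (k + 1), (if n ≤ k then a (k - n) else 0) * z ^ n) := by
      refine hasSum_sum_of_ne_finset_zero fun n hn => ?_
      have hnk : ¬ n ≤ k := by simpa [Nat.lt_succ_iff] using hn
      rw [if_neg hnk, zero_mul]
    have h2 : (∑ n ∈ range (k + 1), (if n ≤ k then a (k - n) else 0) * z ^ n) = s₂ z := by
      rw [hall z]
      refine Finset.sum_congr rfl fun n hn => ?_
      rw [if_pos (by have := Finset.mem_range.1 hn; omega : n ≤ k)]
    rwa [h2] at h1
  have hbc := myUnique hb hc
  intro n hn
  rw [hbc n, if_pos hn]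
end

section
/- Let 𝔤 = V_N ⊕ V_R be a Lie algebra with V_N a subalgebra, and u the projection onto V_R. Define the bracket [ξ,η]₀ := T[u](ξ,η) where T[u](ξ,η) = u²[ξ,η] − u([uξ,η]+[ξ,uη]) + [uξ,uη]. Then [·,·]₀ satisfies [V_N,𝔤]₀ = 0 and [V_R,V_R]₀ ⊆ V_N; consequently [[ξ,η]₀, ζ]₀ = 0 for all ξ,η,ζ, so (𝔤,[·,·]₀) is a 2-step nilpotent Lie algebra. -/
/-- The anti-Inönü–Wigner contracted bracket `[ξ,η]₀ = T[u](ξ,η)` kills `V_N`, sends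
`V_R × V_R` into `V_N`, and is 2-step nilpotent: `(𝔤,[·,·]₀)` is a 2-step nilpotent
Lie algebra. -/
theorem stmt12 {K L : Type*} [Field K] [LieRing L] [LieAlgebra K L]
    (VN VR : Submodule K L) (hcompl : IsCompl VN VR)
    (u : L →ₗ[K] L) (huN : ∀ x ∈ VN, u x = 0) (huR : ∀ x ∈ VR, u x = x)
    (hsub : ∀ x ∈ VN, ∀ y ∈ VN, ⁅x, y⁆ ∈ VN) :
    ∀ b : L → L → L,
      (b = fun ξ η => u (u ⁅ξ, η⁆) - u (⁅u ξ, η⁆ + ⁅ξ, u η⁆) + ⁅u ξ, u η⁆) →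
      (∀ ξ ∈ VN, ∀ η : L, b ξ η = 0) ∧
      (∀ ξ ∈ VR, ∀ η ∈ VR, b ξ η ∈ VN) ∧
      (∀ ξ η : L, b ξ η = - b η ξ) ∧
      (∀ ξ η ζ : L, b (b ξ η) ζ = 0) ∧
      (∀ ξ η ζ : L, b ξ (b η ζ) = b (b ξ η) ζ + b η (b ξ ζ)) := by
  intro b hb
  subst hb
  -- decomposition
  have hdec : ∀ x : L, ∃ n ∈ VN, ∃ r ∈ VR, x = n + r := by
    intro x
    obtain ⟨n, r, hn, hr, h⟩ := Submodule.codisjoint_iff_exists_add_eq.mp hcompl.codisjoint x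
    exact ⟨n, hn, r, hr, h.symm⟩
  have hux : ∀ x : L, u x ∈ VR ∧ x - u x ∈ VN := by
    intro x
    obtain ⟨n, hn, r, hr, rfl⟩ := hdec x
    have h1 : u (n + r) = r := by rw [map_add, huN n hn, huR r hr, zero_add]
    rw [h1]
    exact ⟨hr, by simpa using hn⟩
  have hR : ∀ x : L, u x ∈ VR := fun x => (hux x).1
  have hN : ∀ x : L, x - u x ∈ VN := fun x => (hux x).2
  have hid : ∀ x : L, u (u x) = u x := fun x => huR _ (hR x)
  -- b kills VN on the left
  have hbN : ∀ ξ ∈ VN, ∀ η : L, u (u ⁅ξ, η⁆) - u (⁅u ξ, η⁆ + ⁅ξ, u η⁆) + ⁅u ξ, u η⁆ = 0 := by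
    intro ξ hξ η
    simp only [huN ξ hξ, zero_lie, lie_zero, zero_add, add_zero, hid, map_add, map_zero]
    have h1 : ⁅ξ, η - u η⁆ ∈ VN := hsub _ hξ _ (hN η)
    have h2 : u ⁅ξ, η - u η⁆ = 0 := huN _ h1
    rw [lie_sub, map_sub] at h2
    rw [sub_eq_zero] at h2 ⊢
    exact h2
  -- u (b ξ η) = 0 always
  have hub : ∀ ξ η : L, u (u (u ⁅ξ, η⁆) - u (⁅u ξ, η⁆ + ⁅ξ, u η⁆) + ⁅u ξ, u η⁆) = 0 := by
    intro ξ η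
    have h0 : u ⁅ξ - u ξ, η - u η⁆ = 0 := huN _ (hsub _ (hN ξ) _ (hN η))
    rw [sub_lie, lie_sub, lie_sub, map_sub, map_sub, map_sub] at h0
    simp only [map_add, map_sub, hid]
    rw [show u ⁅ξ, η⁆ - (u ⁅u ξ, η⁆ + u ⁅ξ, u η⁆) + u ⁅u ξ, u η⁆ =
        u ⁅ξ, η⁆ - u ⁅ξ, u η⁆ - (u ⁅u ξ, η⁆ - u ⁅u ξ, u η⁆) from by abel]
    rw [h0]
  have hbVN : ∀ ξ η : L, (u (u ⁅ξ, η⁆) - u (⁅u ξ, η⁆ + ⁅ξ, u η⁆) + ⁅u ξ, u η⁆) ∈ VN := by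
    intro ξ η
    have := hN (u (u ⁅ξ, η⁆) - u (⁅u ξ, η⁆ + ⁅ξ, u η⁆) + ⁅u ξ, u η⁆)
    rwa [hub ξ η, sub_zero] at this
  -- antisymmetry
  have hskew : ∀ ξ η : L,
      (u (u ⁅ξ, η⁆) - u (⁅u ξ, η⁆ + ⁅ξ, u η⁆) + ⁅u ξ, u η⁆) =
      -(u (u ⁅η, ξ⁆) - u (⁅u η, ξ⁆ + ⁅η, u ξ⁆) + ⁅u η, u ξ⁆) := by
    intro ξ η
    rw [← lie_skew η ξ, ← lie_skew (u η) ξ, ← lie_skew η (u ξ), ← lie_skew (u η) (u ξ)]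
    simp only [map_neg, map_add, neg_neg]
    abel
  have hbRzero : ∀ ξ η : L, η ∈ VN →
      u (u ⁅ξ, η⁆) - u (⁅u ξ, η⁆ + ⁅ξ, u η⁆) + ⁅u ξ, u η⁆ = 0 := by
    intro ξ η hη
    rw [hskew ξ η, hbN η hη ξ, neg_zero]
  refine ⟨fun ξ hξ η => hbN ξ hξ η, fun ξ _ η _ => hbVN ξ η, fun ξ η => hskew ξ η,
    fun ξ η ζ => hbN _ (hbVN ξ η) ζ, ?_⟩
  intro ξ η ζ
  beta_reduce
  rw [hbRzero ξ _ (hbVN η ζ), hbN _ (hbVN ξ η) ζ, hbRzero η _ (hbVN ξ ζ), add_zero]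
end
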